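/- arXiv:2012.15486 — 5 statements merged into one kernel-verified Lean document; each statement's English description precedes it below -/
import Mathlib

section
/- For all real numbers ν > 0, σ > 0, h, and y, the Gaussian-prior numerator integral evaluates as: ∫_{-∞}^{∞} g · (1/(2πσν)) · exp( −(y − h·sign(g))²/(2σ²) − g²/(2ν²) ) dg = ν · ( exp(−(h−y)²/(2σ²)) − exp(−(h+y)²/(2σ²)) ) / (2πσ). -/
open Real MeasureTheory Set Filter

lemma integral_mul_exp_neg_mul_sq_Ioi {b : ℝ} (hb : 0 < b) :
    ∫ x : ℝ in Ioi 0, x * Real.exp (-b * x ^ 2) = (2 * b)⁻¹ := by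
  have hderiv : ∀ x ∈ Ici (0:ℝ), HasDerivAt (fun x : ℝ => -(2 * b)⁻¹ * Real.exp (-b * x ^ 2))
      (x * Real.exp (-b * x ^ 2)) x := by
    intro x _
    have : HasDerivAt (fun x : ℝ => -b * x ^ 2) (-b * (2 * x)) x := by
      simpa using ((hasDerivAt_pow 2 x).const_mul (-b))
    convert (this.exp.const_mul (-(2 * b)⁻¹)) using 1
    · rfl
    · rfl
    field_simp
  have hint : IntegrableOn (fun x : ℝ => x * Real.exp (-b * x ^ 2)) (Ioi 0) :=
    (integrable_mul_exp_neg_mul_sq hb).integrableOn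
  have htend : Tendsto (fun x : ℝ => -(2 * b)⁻¹ * Real.exp (-b * x ^ 2)) atTop (nhds 0) := by
    have : Tendsto (fun x : ℝ => Real.exp (-b * x ^ 2)) atTop (nhds 0) := by
      apply Real.tendsto_exp_atBot.comp
      have : Tendsto (fun x : ℝ => b * x ^ 2) atTop atTop :=
        (tendsto_pow_atTop (by norm_num)).const_mul_atTop hb
      exact Filter.Tendsto.congr (fun x => (neg_mul b (x^2)).symm) (tendsto_neg_atTop_atBot.comp this)
    simpa using (this.const_mul (-(2 * b)⁻¹))
  have := integral_Ioi_of_hasDerivAt_of_tendsto' hderiv hint htend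
  rw [this]
  simp

/-- Gaussian-prior numerator integral for the one-bit posterior mean. -/
theorem stmt_0 (ν σ h y : ℝ) (hν : 0 < ν) (hσ : 0 < σ) :
    ∫ g : ℝ, g * (1 / (2 * π * σ * ν)) *
        Real.exp (-(y - h * Real.sign g) ^ 2 / (2 * σ ^ 2) - g ^ 2 / (2 * ν ^ 2)) =
      ν * (Real.exp (-(h - y) ^ 2 / (2 * σ ^ 2)) - Real.exp (-(h + y) ^ 2 / (2 * σ ^ 2))) /
        (2 * π * σ) := by
  set b : ℝ := (2 * ν ^ 2)⁻¹ with hb_def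
  have hb : 0 < b := by positivity
  set C : ℝ := 1 / (2 * π * σ * ν) with hC_def
  set A : ℝ := Real.exp (-(y - h) ^ 2 / (2 * σ ^ 2)) with hA_def
  set B : ℝ := Real.exp (-(y + h) ^ 2 / (2 * σ ^ 2)) with hB_def
  have key : ∀ g : ℝ, g * C * Real.exp (-(y - h * Real.sign g) ^ 2 / (2 * σ ^ 2)
      - g ^ 2 / (2 * ν ^ 2)) =
      (if 0 < g then C * A else C * B) * (g * Real.exp (-b * g ^ 2)) := by
    intro g
    rcases lt_trichotomy g 0 with hg | hg | hg
    · rw [Real.sign_of_neg hg, if_neg (by linarith), Real.exp_sub, div_eq_mul_inv,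
        ← Real.exp_neg]
      have he : -(g ^ 2 / (2 * ν ^ 2)) = -b * g ^ 2 := by rw [hb_def]; field_simp
      rw [he, hB_def]
      ring_nf
    · simp [hg]
    · rw [Real.sign_of_pos hg, if_pos hg, Real.exp_sub, div_eq_mul_inv, ← Real.exp_neg]
      have he : -(g ^ 2 / (2 * ν ^ 2)) = -b * g ^ 2 := by rw [hb_def]; field_simp
      rw [he, hA_def]
      ring_nf
  simp_rw [key]
  have hint : Integrable (fun g : ℝ => (if 0 < g then C * A else C * B) *
      (g * Real.exp (-b * g ^ 2))) := by
    apply Integrable.bdd_mul (c := |C * A| + |C * B|) (integrable_mul_exp_neg_mul_sq hb)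
    · apply Measurable.aestronglyMeasurable
      exact Measurable.ite measurableSet_Ioi measurable_const measurable_const
    · refine ae_of_all _ (fun x => ?_)
      by_cases hx : 0 < x
      · simp only [if_pos hx]; exact le_add_of_nonneg_right (abs_nonneg _)
      · simp only [if_neg hx]; exact le_add_of_nonneg_left (abs_nonneg _)
  rw [← intervalIntegral.integral_Iio_add_Ici (b := (0:ℝ)) hint.integrableOn hint.integrableOn]
  have hIoi : ∫ g in Ici (0:ℝ), (if 0 < g then C * A else C * B) *
      (g * Real.exp (-b * g ^ 2)) = C * A * (2 * b)⁻¹ := by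
    rw [setIntegral_congr_fun measurableSet_Ici
      (g := fun g : ℝ => C * A * (g * Real.exp (-b * g ^ 2)))
      (fun x hx => by
        rcases eq_or_lt_of_le (mem_Ici.mp hx) with h0 | h0
        · simp [← h0]
        · simp [h0])]
    rw [integral_const_mul, integral_Ici_eq_integral_Ioi,
      integral_mul_exp_neg_mul_sq_Ioi hb]
  have hIio : ∫ g in Iio (0:ℝ), (if 0 < g then C * A else C * B) *
      (g * Real.exp (-b * g ^ 2)) = -(C * B * (2 * b)⁻¹) := by
    rw [setIntegral_congr_fun measurableSet_Iio
      (g := fun g : ℝ => C * B * (g * Real.exp (-b * g ^ 2)))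
      (fun x hx => by simp [not_lt.mpr (le_of_lt (mem_Iio.mp hx))])]
    rw [integral_const_mul]
    have : ∫ g in Iio (0:ℝ), g * Real.exp (-b * g ^ 2) = -(2 * b)⁻¹ := by
      have := integral_comp_neg_Ioi (0:ℝ) (fun g : ℝ => g * Real.exp (-b * g ^ 2))
      simp only [neg_zero] at this
      rw [← integral_Iic_eq_integral_Iio, ← this]
      have : ∫ x in Ioi (0:ℝ), -x * Real.exp (-b * (-x) ^ 2)
          = - ∫ x in Ioi (0:ℝ), x * Real.exp (-b * x ^ 2) := by
        rw [← integral_neg]; congr 1; ext x; ring_nf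
      rw [this, integral_mul_exp_neg_mul_sq_Ioi hb]
    rw [this]; ring
  rw [hIio, hIoi]
  have hb2 : (2 * b)⁻¹ = ν ^ 2 := by
    rw [hb_def]; field_simp
  rw [hb2, hC_def, hA_def, hB_def]
  have h1 : -(y - h) ^ 2 = -(h - y) ^ 2 := by ring
  have h2 : -(y + h) ^ 2 = -(h + y) ^ 2 := by ring
  rw [h1, h2]
  field_simp
  ring
end

section
/- (Laplacian-prior MMSE aggregation, Proposition 3.) For all real numbers λ > 0, σ > 0, h, and y, the posterior mean of a zero-mean Laplacian gradient entry given the one-bit channel output equals ( ∫_{-∞}^{∞} g · (1/(2λ))·exp(−|g|/λ) · φ_σ(y − h·sign(g)) dg ) / ( ∫_{-∞}^{∞} (1/(2λ))·exp(−|g|/λ) · φ_σ(y − h·sign(g)) dg ) = λ · tanh( h·y / σ² ). -/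
open Real MeasureTheory Set

lemma aux_L2val {lam : ℝ} (hlam : 0 < lam) :
    ∫ x in Ioi (0:ℝ), Real.exp (-(x/lam)) = lam := by
  have h := Real.integral_rpow_mul_exp_neg_mul_Ioi (a := 1) (r := 1/lam) one_pos
    (by positivity)
  rw [show ((1:ℝ)-1) = 0 by norm_num] at h
  simp only [Real.rpow_zero, one_mul, Real.Gamma_one, mul_one, one_div_one_div,
    Real.rpow_one] at h
  have e : (∫ x in Ioi (0:ℝ), Real.exp (-(x/lam)))
      = ∫ t in Ioi (0:ℝ), Real.exp (-(1/lam * t)) :=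
    setIntegral_congr_fun measurableSet_Ioi (fun x _ => by ring_nf)
  rw [e]; rw [show (1:ℝ)/lam = lam⁻¹ by ring] at *; exact h

lemma aux_L1val {lam : ℝ} (hlam : 0 < lam) :
    ∫ x in Ioi (0:ℝ), x * Real.exp (-(x/lam)) = lam^2 := by
  have h := Real.integral_rpow_mul_exp_neg_mul_Ioi (a := 2) (r := 1/lam) two_pos
    (by positivity)
  rw [show ((2:ℝ)-1) = 1 by norm_num, show Real.Gamma 2 = 1 by
    rw [show (2:ℝ) = 1 + 1 by norm_num, Real.Gamma_add_one one_ne_zero, Real.Gamma_one]; ring,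
    one_div_one_div, mul_one, show lam ^ (2:ℝ) = lam ^ 2 by
      rw [← Real.rpow_natCast lam 2]; norm_num] at h
  have e : (∫ x in Ioi (0:ℝ), x * Real.exp (-(x/lam)))
      = ∫ t in Ioi (0:ℝ), t ^ (1:ℝ) * Real.exp (-(1/lam * t)) :=
    setIntegral_congr_fun measurableSet_Ioi (fun x _ => by rw [Real.rpow_one]; ring_nf)
  rw [e]; exact h

lemma aux_L2int {lam : ℝ} (hlam : 0 < lam) :
    IntegrableOn (fun x : ℝ => Real.exp (-(x/lam))) (Ioi (0:ℝ)) := by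
  refine (exp_neg_integrableOn_Ioi 0 (b := 1/lam) (by positivity)).congr_fun
    (fun x hx => ?_) measurableSet_Ioi
  ring_nf

lemma aux_L1int {lam : ℝ} (hlam : 0 < lam) :
    IntegrableOn (fun x : ℝ => x * Real.exp (-(x/lam))) (Ioi (0:ℝ)) := by
  refine (integrableOn_rpow_mul_exp_neg_mul_rpow (s := 1) (p := 1) (b := 1/lam)
    (by norm_num) one_pos (by positivity)).congr_fun (fun x hx => ?_) measurableSet_Ioi
  simp only [Real.rpow_one]
  ring_nf

lemma aux_negint {f : ℝ → ℝ} (hf : IntegrableOn f (Ioi (0:ℝ))) :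
    IntegrableOn (fun x => f (-x)) (Iio (0:ℝ)) := by
  have emb : MeasurableEmbedding (fun x : ℝ => -x) :=
    (Homeomorph.neg ℝ).isClosedEmbedding.measurableEmbedding
  have hmap : Measure.map (fun x : ℝ => -x)
      (volume.restrict ((fun x : ℝ => -x) ⁻¹' (Ioi 0))) = volume.restrict (Ioi 0) := by
    rw [← emb.restrict_map, Measure.map_neg_eq_self]
  have : Integrable f (Measure.map (fun x : ℝ => -x)
      (volume.restrict ((fun x : ℝ => -x) ⁻¹' (Ioi 0)))) := by rwa [hmap]
  have h2 := (emb.integrable_map_iff).mp this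
  simpa [IntegrableOn, neg_preimage, neg_Ioi, Function.comp_def] using h2

lemma aux_negval {f : ℝ → ℝ} :
    ∫ x in Iio (0:ℝ), f (-x) = ∫ x in Ioi (0:ℝ), f x := by
  rw [← integral_Iic_eq_integral_Iio, integral_comp_neg_Iic, neg_zero]

lemma aux_negval1 (c lam : ℝ) :
    ∫ x in Iio (0:ℝ), c * ((-x) * Real.exp (-((-x)/lam)))
      = ∫ x in Ioi (0:ℝ), c * (x * Real.exp (-(x/lam))) :=
  aux_negval (f := fun x => c * (x * Real.exp (-(x/lam))))

lemma aux_negval2 (c lam : ℝ) :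
    ∫ x in Iio (0:ℝ), c * Real.exp (-((-x)/lam))
      = ∫ x in Ioi (0:ℝ), c * Real.exp (-(x/lam)) :=
  aux_negval (f := fun x => c * Real.exp (-(x/lam)))

set_option maxHeartbeats 1000000 in
/-- Proposition 3: Laplacian-prior MMSE aggregation. -/
theorem stmt_4 (lam σ h y : ℝ) (hlam : 0 < lam) (hσ : 0 < σ)
    (φ : ℝ → ℝ → ℝ)
    (hφ : ∀ s x : ℝ, φ s x = (1 / (Real.sqrt (2 * π) * s)) * Real.exp (-x ^ 2 / (2 * s ^ 2))) :
    (∫ g : ℝ, g * ((1 / (2 * lam)) * Real.exp (-|g| / lam)) * φ σ (y - h * Real.sign g)) /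
      (∫ g : ℝ, (1 / (2 * lam)) * Real.exp (-|g| / lam) * φ σ (y - h * Real.sign g)) =
    lam * Real.tanh (h * y / σ ^ 2) := by
  set A := φ σ (y - h) with hAdef
  set B := φ σ (y + h) with hBdef
  have eqNp : EqOn (fun x : ℝ => (1 / (2 * lam) * A) * (x * Real.exp (-(x / lam))))
      (fun g : ℝ => g * (1 / (2 * lam) * Real.exp (-|g| / lam)) * φ σ (y - h * Real.sign g))
      (Ioi 0) := by
    intro x hx
    simp only [Real.sign_of_pos (mem_Ioi.mp hx), abs_of_pos (mem_Ioi.mp hx), mul_one, ← hAdef]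
    ring
  have eqNm : EqOn (fun x : ℝ => -((1 / (2 * lam) * B) * ((-x) * Real.exp (-((-x) / lam)))))
      (fun g : ℝ => g * (1 / (2 * lam) * Real.exp (-|g| / lam)) * φ σ (y - h * Real.sign g))
      (Iio 0) := by
    intro x hx
    simp only [Real.sign_of_neg (mem_Iio.mp hx), abs_of_neg (mem_Iio.mp hx),
      mul_neg_one, sub_neg_eq_add, neg_neg, ← hBdef]
    ring
  have eqDp : EqOn (fun x : ℝ => (1 / (2 * lam) * A) * Real.exp (-(x / lam)))
      (fun g : ℝ => 1 / (2 * lam) * Real.exp (-|g| / lam) * φ σ (y - h * Real.sign g))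
      (Ioi 0) := by
    intro x hx
    simp only [Real.sign_of_pos (mem_Ioi.mp hx), abs_of_pos (mem_Ioi.mp hx), mul_one, ← hAdef]
    ring
  have eqDm : EqOn (fun x : ℝ => (1 / (2 * lam) * B) * Real.exp (-((-x) / lam)))
      (fun g : ℝ => 1 / (2 * lam) * Real.exp (-|g| / lam) * φ σ (y - h * Real.sign g))
      (Iio 0) := by
    intro x hx
    simp only [Real.sign_of_neg (mem_Iio.mp hx), abs_of_neg (mem_Iio.mp hx),
      mul_neg_one, sub_neg_eq_add, neg_neg, ← hBdef]
    ring
  have iNp : IntegrableOn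
      (fun g : ℝ => g * (1 / (2 * lam) * Real.exp (-|g| / lam)) * φ σ (y - h * Real.sign g))
      (Ioi 0) :=
    IntegrableOn.congr_fun ((aux_L1int hlam).const_mul (1 / (2 * lam) * A)) eqNp measurableSet_Ioi
  have iNm : IntegrableOn
      (fun g : ℝ => g * (1 / (2 * lam) * Real.exp (-|g| / lam)) * φ σ (y - h * Real.sign g))
      (Iio 0) :=
    IntegrableOn.congr_fun ((aux_negint ((aux_L1int hlam).const_mul (1 / (2 * lam) * B))).neg)
      eqNm measurableSet_Iio
  have iDp : IntegrableOn
      (fun g : ℝ => 1 / (2 * lam) * Real.exp (-|g| / lam) * φ σ (y - h * Real.sign g))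
      (Ioi 0) :=
    IntegrableOn.congr_fun ((aux_L2int hlam).const_mul (1 / (2 * lam) * A)) eqDp measurableSet_Ioi
  have iDm : IntegrableOn
      (fun g : ℝ => 1 / (2 * lam) * Real.exp (-|g| / lam) * φ σ (y - h * Real.sign g))
      (Iio 0) :=
    IntegrableOn.congr_fun (aux_negint ((aux_L2int hlam).const_mul (1 / (2 * lam) * B)))
      eqDm measurableSet_Iio
  have vNp : (∫ x in Ioi (0:ℝ),
      x * (1 / (2 * lam) * Real.exp (-|x| / lam)) * φ σ (y - h * Real.sign x))
      = 1 / (2 * lam) * A * lam ^ 2 := by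
    rw [← setIntegral_congr_fun measurableSet_Ioi eqNp, integral_const_mul, aux_L1val hlam]
  have vNm : (∫ x in Iio (0:ℝ),
      x * (1 / (2 * lam) * Real.exp (-|x| / lam)) * φ σ (y - h * Real.sign x))
      = -(1 / (2 * lam) * B * lam ^ 2) := by
    rw [← setIntegral_congr_fun measurableSet_Iio eqNm, integral_neg, aux_negval1,
      integral_const_mul, aux_L1val hlam]
  have vDp : (∫ x in Ioi (0:ℝ),
      1 / (2 * lam) * Real.exp (-|x| / lam) * φ σ (y - h * Real.sign x))
      = 1 / (2 * lam) * A * lam := by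
    rw [← setIntegral_congr_fun measurableSet_Ioi eqDp, integral_const_mul, aux_L2val hlam]
  have vDm : (∫ x in Iio (0:ℝ),
      1 / (2 * lam) * Real.exp (-|x| / lam) * φ σ (y - h * Real.sign x))
      = 1 / (2 * lam) * B * lam := by
    rw [← setIntegral_congr_fun measurableSet_Iio eqDm, aux_negval2,
      integral_const_mul, aux_L2val hlam]
  have hN : (∫ g : ℝ,
      g * (1 / (2 * lam) * Real.exp (-|g| / lam)) * φ σ (y - h * Real.sign g))
      = 1 / (2 * lam) * A * lam ^ 2 - 1 / (2 * lam) * B * lam ^ 2 := by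
    rw [← intervalIntegral.integral_Iic_add_Ioi (iNm.congr_set_ae Iio_ae_eq_Iic.symm) iNp,
      integral_Iic_eq_integral_Iio, vNm, vNp]
    ring
  have hD : (∫ g : ℝ,
      1 / (2 * lam) * Real.exp (-|g| / lam) * φ σ (y - h * Real.sign g))
      = 1 / (2 * lam) * A * lam + 1 / (2 * lam) * B * lam := by
    rw [← intervalIntegral.integral_Iic_add_Ioi (iDm.congr_set_ae Iio_ae_eq_Iic.symm) iDp,
      integral_Iic_eq_integral_Iio, vDm, vDp]
    ring
  rw [hN, hD]
  set t : ℝ := h * y / σ ^ 2 with htdef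
  set K : ℝ := (1 / (Real.sqrt (2 * π) * σ)) * Real.exp (-(y ^ 2 + h ^ 2) / (2 * σ ^ 2))
    with hKdef
  have hS : 0 < Real.sqrt (2 * π) := Real.sqrt_pos.mpr (by positivity)
  have hσ' : σ ≠ 0 := ne_of_gt hσ
  have hK : 0 < K := by positivity
  have hA : A = K * Real.exp t := by
    rw [hAdef, hφ, hKdef, mul_assoc, ← Real.exp_add, htdef]
    congr 1
    field_simp
    ring
  have hB : B = K * Real.exp (-t) := by
    rw [hBdef, hφ, hKdef, mul_assoc, ← Real.exp_add, htdef]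
    congr 1
    field_simp
    ring
  rw [hA, hB, Real.tanh_eq_sinh_div_cosh, Real.sinh_eq, Real.cosh_eq]
  have h1 : 0 < Real.exp t + Real.exp (-t) := by positivity
  have h2 : (Real.exp t + Real.exp (-t)) ≠ 0 := ne_of_gt h1
  have hlam' : lam ≠ 0 := ne_of_gt hlam
  have hK' : K ≠ 0 := ne_of_gt hK
  field_simp
end

section
/- (Optimal linear aggregation, scalar form.) Let ν > 0, σ > 0, and h ≠ 0 be real numbers, let G ~ N(0, ν²) and N ~ N(0, σ²) be independent real random variables, and set Y = h·sign(G) + N. Define c* = √(2/π)·h·ν / (h² + σ²). Then for every real c, E[ (G − c*·Y)² ] ≤ E[ (G − c·Y)² ], and the minimum value is E[ (G − c*·Y)² ] = ν² · ( 1 − (2/π)·h² / (h² + σ²) ). -/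
open Real MeasureTheory ProbabilityTheory Set Filter

lemma aux_exp_tendsto (b : ℝ) (hb : 0 < b) :
    Tendsto (fun x : ℝ => rexp (-b * x ^ 2)) atTop (nhds 0) := by
  have h1 : Tendsto (fun x : ℝ => b * x ^ 2) atTop atTop :=
    (tendsto_pow_atTop two_ne_zero).const_mul_atTop hb
  have := Real.tendsto_exp_atBot.comp (tendsto_neg_atBot_iff.mpr h1)
  simpa [Function.comp_def, neg_mul] using this

lemma aux_tendsto (b : ℝ) (hb : 0 < b) (s : ℝ) :
    Tendsto (fun x : ℝ => x ^ s * rexp (-b * x ^ 2)) atTop (nhds 0) := by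
  refine (rpow_mul_exp_neg_mul_sq_isLittleO_exp_neg hb s).trans_tendsto ?_
  have h1 : Tendsto (fun x : ℝ => (1/2 : ℝ) * x) atTop atTop :=
    tendsto_id.const_mul_atTop one_half_pos
  have := Real.tendsto_exp_atBot.comp (tendsto_neg_atBot_iff.mpr h1)
  simpa [Function.comp_def, neg_mul] using this

lemma aux_int_x (b : ℝ) (hb : 0 < b) :
    ∫ x in Ioi (0:ℝ), x * rexp (-b * x ^ 2) = 1 / (2 * b) := by
  have A : ∀ x ∈ Ioi (0:ℝ), HasDerivAt (fun x : ℝ => -(2*b)⁻¹ * rexp (-b * x ^ 2))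
      (x * rexp (-b * x ^ 2)) x := by
    intro x _
    have h : HasDerivAt (fun x : ℝ => -b * x ^ 2) (-b * (2 * x)) x := by
      simpa using ((hasDerivAt_pow 2 x).const_mul (-b))
    have := (h.exp).const_mul (-(2*b)⁻¹)
    refine this.congr_deriv ?_
    field_simp [hb.ne']
  have hint : IntegrableOn (fun x : ℝ => x * rexp (-b * x ^ 2)) (Ioi 0) :=
    (integrable_mul_exp_neg_mul_sq hb).integrableOn
  have hT : Tendsto (fun x : ℝ => -(2*b)⁻¹ * rexp (-b * x ^ 2)) atTop (nhds 0) := by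
    simpa using (aux_exp_tendsto b hb).const_mul (-(2*b)⁻¹)
  have hc : ContinuousWithinAt (fun x : ℝ => -(2*b)⁻¹ * rexp (-b * x ^ 2)) (Ici 0) 0 :=
    (by fun_prop : Continuous fun x : ℝ => -(2*b)⁻¹ * rexp (-b * x ^ 2)).continuousWithinAt
  have := integral_Ioi_of_hasDerivAt_of_tendsto hc A hint hT
  rw [this]
  simp

lemma aux_integrable_sq (b : ℝ) (hb : 0 < b) :
    Integrable (fun x : ℝ => x ^ 2 * rexp (-b * x ^ 2)) := by
  have := integrable_rpow_mul_exp_neg_mul_sq hb (show (-1:ℝ) < 2 by norm_num)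
  refine this.congr (MeasureTheory.ae_of_all _ fun x => ?_)
  simp [Real.rpow_natCast]

lemma aux_int_sq (b : ℝ) (hb : 0 < b) :
    ∫ x : ℝ, x ^ 2 * rexp (-b * x ^ 2) = √(π / b) / (2 * b) := by
  have comp : ∫ x : ℝ, x ^ 2 * rexp (-b * x ^ 2)
      = 2 * ∫ x in Ioi (0:ℝ), x ^ 2 * rexp (-b * x ^ 2) := by
    rw [← integral_comp_abs (f := fun x => x ^ 2 * rexp (-b * x ^ 2))]
    congr 1
    ext x
    rw [sq_abs]
  have A : ∀ x ∈ Ioi (0:ℝ), HasDerivAt (fun x : ℝ => -(2*b)⁻¹ * (x * rexp (-b * x ^ 2)))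
      (x ^ 2 * rexp (-b * x ^ 2) - (2*b)⁻¹ * rexp (-b * x ^ 2)) x := by
    intro x _
    have h : HasDerivAt (fun x : ℝ => -b * x ^ 2) (-b * (2 * x)) x := by
      simpa using ((hasDerivAt_pow 2 x).const_mul (-b))
    have h2 : HasDerivAt (fun x : ℝ => x * rexp (-b * x ^ 2))
        (1 * rexp (-b * x ^ 2) + x * (rexp (-b * x ^ 2) * (-b * (2 * x)))) x :=
      (hasDerivAt_id x).mul h.exp
    have := h2.const_mul (-(2*b)⁻¹)
    refine this.congr_deriv ?_
    field_simp [hb.ne']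
    ring
  have hint1 : IntegrableOn (fun x : ℝ => x ^ 2 * rexp (-b * x ^ 2)) (Ioi 0) :=
    (aux_integrable_sq b hb).integrableOn
  have hint2 : IntegrableOn (fun x : ℝ => (2*b)⁻¹ * rexp (-b * x ^ 2)) (Ioi 0) :=
    ((integrable_exp_neg_mul_sq hb).const_mul _).integrableOn
  have hT : Tendsto (fun x : ℝ => -(2*b)⁻¹ * (x * rexp (-b * x ^ 2))) atTop (nhds 0) := by
    have := (aux_tendsto b hb 1).const_mul (-(2*b)⁻¹)
    simp only [mul_zero] at this
    refine this.congr' ?_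
    filter_upwards [eventually_gt_atTop (0:ℝ)] with x hx
    rw [Real.rpow_one]
  have hc : ContinuousWithinAt (fun x : ℝ => -(2*b)⁻¹ * (x * rexp (-b * x ^ 2))) (Ici 0) 0 :=
    (by fun_prop : Continuous fun x : ℝ => -(2*b)⁻¹ * (x * rexp (-b * x ^ 2))).continuousWithinAt
  have key := integral_Ioi_of_hasDerivAt_of_tendsto hc A (hint1.sub hint2) hT
  rw [integral_sub hint1 hint2] at key
  simp only [mul_zero, Real.exp_zero, mul_one, zero_sub, neg_neg, zero_pow, mul_zero] at key
  have e2 : ∫ x in Ioi (0:ℝ), (2*b)⁻¹ * rexp (-b * x ^ 2) = (2*b)⁻¹ * (√(π / b) / 2) := by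
    rw [MeasureTheory.integral_const_mul, integral_gaussian_Ioi]
  rw [comp]
  rw [e2] at key
  have hb' : (2*b) ≠ 0 := by positivity
  have : ∫ x in Ioi (0:ℝ), x ^ 2 * rexp (-b * x ^ 2) = (2*b)⁻¹ * (√(π / b) / 2) := by
    linarith [key]
  rw [this]
  field_simp

lemma aux_int_abs (b : ℝ) (hb : 0 < b) :
    ∫ x : ℝ, |x| * rexp (-b * x ^ 2) = 1 / b := by
  have comp : ∫ x : ℝ, |x| * rexp (-b * x ^ 2)
      = 2 * ∫ x in Ioi (0:ℝ), x * rexp (-b * x ^ 2) := by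
    rw [← integral_comp_abs (f := fun x => x * rexp (-b * x ^ 2))]
    congr 1
    ext x
    rw [sq_abs]
  rw [comp, aux_int_x b hb]
  field_simp

lemma aux_integrable_abs (b : ℝ) (hb : 0 < b) :
    Integrable (fun x : ℝ => |x| * rexp (-b * x ^ 2)) := by
  have := (integrable_mul_exp_neg_mul_sq hb).abs
  refine this.congr (MeasureTheory.ae_of_all _ fun x => ?_)
  simp [abs_mul, abs_of_nonneg (Real.exp_nonneg _)]

section Gauss
variable {ν : ℝ} (hν : 0 < ν)

noncomputable def gb (ν : ℝ) : ℝ := (2 * ν ^ 2)⁻¹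

include hν in
lemma gb_pos : 0 < gb ν := by
  have := hν.ne'
  unfold gb; positivity

include hν in
lemma gauss_pdf_eq (x : ℝ) :
    gaussianPDFReal 0 ⟨ν ^ 2, sq_nonneg ν⟩ x
      = (√(2 * π * ν ^ 2))⁻¹ * rexp (-(gb ν) * x ^ 2) := by
  have hne := hν.ne'
  unfold gaussianPDFReal gb
  simp only [NNReal.coe_mk, sub_zero]
  congr 1
  field_simp
  rfl

include hν in
lemma gauss_integral (g : ℝ → ℝ) :
    ∫ x, g x ∂(gaussianReal 0 ⟨ν ^ 2, sq_nonneg ν⟩)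
      = ∫ x, ((√(2 * π * ν ^ 2))⁻¹ * rexp (-(gb ν) * x ^ 2)) * g x := by
  have hv : (⟨ν ^ 2, sq_nonneg ν⟩ : NNReal) ≠ 0 := by
    simp [← NNReal.coe_ne_zero]
    positivity
  rw [gaussianReal_of_var_ne_zero 0 hv]
  unfold gaussianPDF
  have : ∀ x : ℝ, ENNReal.ofReal (gaussianPDFReal 0 ⟨ν ^ 2, sq_nonneg ν⟩ x)
      = ((gaussianPDFReal 0 ⟨ν ^ 2, sq_nonneg ν⟩ x).toNNReal : ENNReal) := fun x => rfl
  simp_rw [this]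
  erw [integral_withDensity_eq_integral_smul
    ((measurable_gaussianPDFReal 0 _).real_toNNReal) g]
  congr 1
  ext x
  simp only [gauss_pdf_eq hν x]
  rw [NNReal.smul_def, Real.coe_toNNReal _ (by positivity), smul_eq_mul]

include hν in
lemma gauss_integrable (g : ℝ → ℝ)
    (h : Integrable (fun x => rexp (-(gb ν) * x ^ 2) * g x)) :
    Integrable g (gaussianReal 0 ⟨ν ^ 2, sq_nonneg ν⟩) := by
  have hv : (⟨ν ^ 2, sq_nonneg ν⟩ : NNReal) ≠ 0 := by
    simp [← NNReal.coe_ne_zero]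
    positivity
  rw [gaussianReal_of_var_ne_zero 0 hv]
  unfold gaussianPDF
  have : ∀ x : ℝ, ENNReal.ofReal (gaussianPDFReal 0 ⟨ν ^ 2, sq_nonneg ν⟩ x)
      = ((gaussianPDFReal 0 ⟨ν ^ 2, sq_nonneg ν⟩ x).toNNReal : ENNReal) := fun x => rfl
  simp_rw [this]
  erw [integrable_withDensity_iff_integrable_smul
    ((measurable_gaussianPDFReal 0 _).real_toNNReal)]
  have := h.const_mul (√(2 * π * ν ^ 2))⁻¹
  refine this.congr (MeasureTheory.ae_of_all _ fun x => ?_)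
  simp only [gauss_pdf_eq hν x]
  rw [NNReal.smul_def, Real.coe_toNNReal _ (by positivity), smul_eq_mul]
  ring

include hν in
lemma gauss_pi_div : π / gb ν = 2 * π * ν ^ 2 := by
  have hne := hν.ne'
  unfold gb
  field_simp

include hν in
lemma gauss_sqrt_pos : 0 < √(2 * π * ν ^ 2) := by
  have hne := hν.ne'
  have := pi_pos
  positivity

include hν in
lemma gauss_moment2 :
    ∫ x, x ^ 2 ∂(gaussianReal 0 ⟨ν ^ 2, sq_nonneg ν⟩) = ν ^ 2 := by
  rw [gauss_integral hν]
  rw [show (fun x => ((√(2 * π * ν ^ 2))⁻¹ * rexp (-(gb ν) * x ^ 2)) * x ^ 2)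
      = fun x => (√(2 * π * ν ^ 2))⁻¹ * (x ^ 2 * rexp (-(gb ν) * x ^ 2))
      from funext fun x => by ring]
  rw [MeasureTheory.integral_const_mul, aux_int_sq _ (gb_pos hν), gauss_pi_div hν]
  have h1 : gb ν = (2 * ν ^ 2)⁻¹ := rfl
  have h2 := (gauss_sqrt_pos hν).ne'
  have hne := hν.ne'
  rw [h1]
  field_simp

include hν in
lemma gauss_moment_abs :
    ∫ x, |x| ∂(gaussianReal 0 ⟨ν ^ 2, sq_nonneg ν⟩) = ν * √(2 / π) := by
  rw [gauss_integral hν]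
  rw [show (fun x => ((√(2 * π * ν ^ 2))⁻¹ * rexp (-(gb ν) * x ^ 2)) * |x|)
      = fun x => (√(2 * π * ν ^ 2))⁻¹ * (|x| * rexp (-(gb ν) * x ^ 2))
      from funext fun x => by ring]
  rw [MeasureTheory.integral_const_mul, aux_int_abs _ (gb_pos hν)]
  have h1 : gb ν = (2 * ν ^ 2)⁻¹ := rfl
  have hne := hν.ne'
  have hπ := pi_pos
  rw [h1, show √(2 * π * ν ^ 2) = √(2 * π) * ν by
    rw [Real.sqrt_mul (by positivity), Real.sqrt_sq hν.le]]
  rw [Real.sqrt_div (by norm_num : (0:ℝ) ≤ 2), Real.sqrt_mul (by norm_num : (0:ℝ) ≤ 2)]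
  have h2 : √2 * √2 = 2 := Real.mul_self_sqrt (by norm_num)
  have hπ2 : 0 < √π := Real.sqrt_pos.mpr hπ
  have h22 : 0 < √2 := Real.sqrt_pos.mpr (by norm_num)
  field_simp
  linear_combination (-1) * h2

include hν in
lemma gauss_moment1 :
    ∫ x, x ∂(gaussianReal 0 ⟨ν ^ 2, sq_nonneg ν⟩) = 0 := by
  rw [gauss_integral hν]
  set f : ℝ → ℝ := fun x => (√(2 * π * ν ^ 2))⁻¹ * rexp (-(gb ν) * x ^ 2) * x with hf
  have h1 : ∫ x, f (-x) = ∫ x, f x := MeasureTheory.integral_neg_eq_self f volume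
  have h2 : ∀ x, f (-x) = - f x := by
    intro x
    simp only [hf, neg_sq]
    ring
  simp_rw [h2, MeasureTheory.integral_neg] at h1
  linarith


include hν in
lemma gauss_integrable_sq' :
    Integrable (fun x : ℝ => x ^ 2) (gaussianReal 0 ⟨ν ^ 2, sq_nonneg ν⟩) := by
  refine gauss_integrable hν _ ?_
  exact (aux_integrable_sq _ (gb_pos hν)).congr (MeasureTheory.ae_of_all _ fun x => by ring)

include hν in
lemma gauss_integrable_abs' :
    Integrable (fun x : ℝ => |x|) (gaussianReal 0 ⟨ν ^ 2, sq_nonneg ν⟩) := by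
  refine gauss_integrable hν _ ?_
  exact (aux_integrable_abs _ (gb_pos hν)).congr (MeasureTheory.ae_of_all _ fun x => by ring)

include hν in
lemma gauss_integrable_id' :
    Integrable (fun x : ℝ => x) (gaussianReal 0 ⟨ν ^ 2, sq_nonneg ν⟩) := by
  refine (gauss_integrable_abs' hν).mono measurable_id.aestronglyMeasurable ?_
  exact MeasureTheory.ae_of_all _ fun x => by simp

include hν in
lemma gauss_no_atom : (gaussianReal 0 ⟨ν ^ 2, sq_nonneg ν⟩) {0} = 0 := by
  have hv : (⟨ν ^ 2, sq_nonneg ν⟩ : NNReal) ≠ 0 := by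
    simp [← NNReal.coe_ne_zero]
    positivity
  exact gaussianReal_absolutelyContinuous 0 hv (Real.volume_singleton)

end Gauss

lemma real_sign_measurable : Measurable Real.sign := by
  unfold Real.sign
  exact Measurable.ite (measurableSet_lt measurable_id measurable_const) measurable_const
    (Measurable.ite (measurableSet_lt measurable_const measurable_id) measurable_const
      measurable_const)

lemma real_mul_sign (x : ℝ) : x * Real.sign x = |x| := by
  rcases lt_trichotomy x 0 with h|h|h
  · rw [Real.sign_of_neg h, abs_of_neg h]; ring
  · simp [h]
  · rw [Real.sign_of_pos h, abs_of_pos h]; ring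

/-- Optimal linear (Bussgang-type) aggregation, scalar form: the coefficient
c* = √(2/π)·h·ν/(h² + σ²) minimizes the MSE among all linear estimators, and the
minimum value is ν²·(1 − (2/π)·h²/(h² + σ²)). -/
theorem stmt_11 {Ω : Type*} [MeasurableSpace Ω] (μ : Measure Ω) [IsProbabilityMeasure μ]
    (ν σ h : ℝ) (hν : 0 < ν) (hσ : 0 < σ) (hh : h ≠ 0) (G N : Ω → ℝ)
    (hGmeas : Measurable G) (hNmeas : Measurable N)
    (hG : μ.map G = gaussianReal 0 ⟨ν ^ 2, sq_nonneg ν⟩)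
    (hN : μ.map N = gaussianReal 0 ⟨σ ^ 2, sq_nonneg σ⟩)
    (hindep : IndepFun G N μ)
    (Y : Ω → ℝ) (hY : Y = fun ω => h * Real.sign (G ω) + N ω)
    (cstar : ℝ) (hcstar : cstar = Real.sqrt (2 / π) * h * ν / (h ^ 2 + σ ^ 2)) :
    (∀ c : ℝ, ∫ ω, (G ω - cstar * Y ω) ^ 2 ∂μ ≤ ∫ ω, (G ω - c * Y ω) ^ 2 ∂μ) ∧
    ∫ ω, (G ω - cstar * Y ω) ^ 2 ∂μ = ν ^ 2 * (1 - (2 / π) * h ^ 2 / (h ^ 2 + σ ^ 2)) := by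
  subst hY
  set s : Ω → ℝ := fun ω => Real.sign (G ω) with hs
  have hsmeas : Measurable s := real_sign_measurable.comp hGmeas
  -- transfer lemma
  have htransG : ∀ f : ℝ → ℝ, Measurable f →
      ∫ ω, f (G ω) ∂μ = ∫ x, f x ∂(gaussianReal 0 ⟨ν ^ 2, sq_nonneg ν⟩) := by
    intro f hf
    rw [← hG, MeasureTheory.integral_map hGmeas.aemeasurable hf.aestronglyMeasurable]
  have htransN : ∀ f : ℝ → ℝ, Measurable f →
      ∫ ω, f (N ω) ∂μ = ∫ x, f x ∂(gaussianReal 0 ⟨σ ^ 2, sq_nonneg σ⟩) := by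
    intro f hf
    rw [← hN, MeasureTheory.integral_map hNmeas.aemeasurable hf.aestronglyMeasurable]
  -- integrability transfers
  have hintf : ∀ f : ℝ → ℝ, Measurable f →
      Integrable f (gaussianReal 0 ⟨ν ^ 2, sq_nonneg ν⟩) →
      Integrable (fun ω => f (G ω)) μ := by
    intro f hf hint
    rw [← hG] at hint
    exact (MeasureTheory.integrable_map_measure hf.aestronglyMeasurable
      hGmeas.aemeasurable).mp hint
  have hintfN : ∀ f : ℝ → ℝ, Measurable f →
      Integrable f (gaussianReal 0 ⟨σ ^ 2, sq_nonneg σ⟩) →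
      Integrable (fun ω => f (N ω)) μ := by
    intro f hf hint
    rw [← hN] at hint
    exact (MeasureTheory.integrable_map_measure hf.aestronglyMeasurable
      hNmeas.aemeasurable).mp hint
  have intG2 : Integrable (fun ω => (G ω) ^ 2) μ :=
    hintf _ (measurable_id.pow_const 2) (gauss_integrable_sq' hν)
  have intN2 : Integrable (fun ω => (N ω) ^ 2) μ :=
    hintfN _ (measurable_id.pow_const 2) (gauss_integrable_sq' hσ)
  have intGabs : Integrable (fun ω => |G ω|) μ :=
    hintf _ measurable_abs (gauss_integrable_abs' hν)
  have intG : Integrable G μ := hintf _ measurable_id (gauss_integrable_id' hν)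
  have intN : Integrable N μ := hintfN _ measurable_id (gauss_integrable_id' hσ)
  have intGS : Integrable (fun ω => G ω * s ω) μ := by
    refine intGabs.congr (MeasureTheory.ae_of_all _ fun ω => ?_)
    exact (real_mul_sign (G ω)).symm
  have intGN : Integrable (fun ω => G ω * N ω) μ := hindep.integrable_mul intG intN
  have hsbd : ∀ ω, ‖s ω‖ ≤ 1 := by
    intro ω
    rcases Real.sign_apply_eq (G ω) with h'|h'|h' <;> simp [hs, h']
  have intSN : Integrable (fun ω => s ω * N ω) μ :=
    intN.bdd_mul hsmeas.aestronglyMeasurable (MeasureTheory.ae_of_all _ hsbd)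
  -- a.e. facts
  have hG0 : μ {ω | G ω = 0} = 0 := by
    have h1 : μ (G ⁻¹' {0}) = (μ.map G) {0} :=
      (Measure.map_apply hGmeas (measurableSet_singleton 0)).symm
    have h2 : (G ⁻¹' {0}) = {ω | G ω = 0} := rfl
    rw [← h2, h1, hG, gauss_no_atom hν]
  have hae : ∀ᵐ ω ∂μ, G ω ≠ 0 := by
    rw [MeasureTheory.ae_iff]
    simpa using hG0
  have hs_sq : (fun ω => (s ω) ^ 2) =ᵐ[μ] fun _ => (1:ℝ) := by
    filter_upwards [hae] with ω hω
    rcases Real.sign_apply_eq_of_ne_zero _ hω with h'|h' <;> simp [hs, h']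
  have intS2 : Integrable (fun ω => (s ω) ^ 2) μ :=
    (MeasureTheory.integrable_const (1:ℝ)).congr hs_sq.symm
  -- integral values
  have I1 : ∫ ω, (G ω) ^ 2 ∂μ = ν ^ 2 := by
    have := htransG (fun x => x ^ 2) (by fun_prop)
    rw [gauss_moment2 hν] at this
    exact this
  have I6 : ∫ ω, (N ω) ^ 2 ∂μ = σ ^ 2 := by
    have := htransN (fun x => x ^ 2) (by fun_prop)
    rw [gauss_moment2 hσ] at this
    exact this
  have IG : ∫ ω, G ω ∂μ = 0 := by
    have := htransG (fun x => x) (by fun_prop)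
    rw [gauss_moment1 hν] at this
    exact this
  have IN : ∫ ω, N ω ∂μ = 0 := by
    have := htransN (fun x => x) (by fun_prop)
    rw [gauss_moment1 hσ] at this
    exact this
  have I2 : ∫ ω, G ω * s ω ∂μ = ν * √(2 / π) := by
    have e : (fun ω => G ω * s ω) = fun ω => |G ω| := funext fun ω => real_mul_sign (G ω)
    have h2 := htransG (fun x => |x|) (by fun_prop)
    rw [gauss_moment_abs hν] at h2
    rw [e]
    exact h2
  have I3 : ∫ ω, G ω * N ω ∂μ = 0 := by
    have := hindep.integral_mul_eq_mul_integral hGmeas.aestronglyMeasurable hNmeas.aestronglyMeasurable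
    rw [show (G * N) = fun ω => G ω * N ω from rfl] at this
    rw [this, IG, zero_mul]
  have I4 : ∫ ω, (s ω) ^ 2 ∂μ = 1 := by
    rw [MeasureTheory.integral_congr_ae hs_sq]
    simp
  have I5 : ∫ ω, s ω * N ω ∂μ = 0 := by
    have hisn : IndepFun s N μ := hindep.comp real_sign_measurable measurable_id
    have := hisn.integral_mul_eq_mul_integral hsmeas.aestronglyMeasurable hNmeas.aestronglyMeasurable
    rw [show (s * N) = fun ω => s ω * N ω from rfl] at this
    rw [this, IN, mul_zero]
  -- key formula
  have key : ∀ c : ℝ, ∫ ω, (G ω - c * (h * Real.sign (G ω) + N ω)) ^ 2 ∂μ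
      = ν ^ 2 - 2 * c * (h * (ν * √(2 / π))) + c ^ 2 * (h ^ 2 + σ ^ 2) := by
    intro c
    have e : (fun ω => (G ω - c * (h * Real.sign (G ω) + N ω)) ^ 2)
        = fun ω => ((((((G ω) ^ 2 + (-(2*c*h)) * (G ω * s ω)) + (-(2*c)) * (G ω * N ω))
            + (c^2*h^2) * (s ω) ^ 2) + (2*c^2*h) * (s ω * N ω)) + c^2 * (N ω) ^ 2) :=
      funext fun ω => by simp only [hs]; ring
    rw [e]
    have E1 : ∫ ω, ((G ω) ^ 2 + (-(2*c*h)) * (G ω * s ω)) ∂μ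
        = (∫ ω, (G ω) ^ 2 ∂μ) + ∫ ω, (-(2*c*h)) * (G ω * s ω) ∂μ :=
      MeasureTheory.integral_add intG2 (intGS.const_mul _)
    have A1 : Integrable (fun ω => (G ω) ^ 2 + (-(2*c*h)) * (G ω * s ω)) μ :=
      intG2.add (intGS.const_mul _)
    have E2 : ∫ ω, ((G ω) ^ 2 + (-(2*c*h)) * (G ω * s ω) + (-(2*c)) * (G ω * N ω)) ∂μ
        = (∫ ω, ((G ω) ^ 2 + (-(2*c*h)) * (G ω * s ω)) ∂μ) + ∫ ω, (-(2*c)) * (G ω * N ω) ∂μ :=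
      MeasureTheory.integral_add A1 (intGN.const_mul _)
    have A2 : Integrable (fun ω => (G ω) ^ 2 + (-(2*c*h)) * (G ω * s ω)
        + (-(2*c)) * (G ω * N ω)) μ := A1.add (intGN.const_mul _)
    have E3 : ∫ ω, ((G ω) ^ 2 + (-(2*c*h)) * (G ω * s ω) + (-(2*c)) * (G ω * N ω)
          + (c^2*h^2) * (s ω) ^ 2) ∂μ
        = (∫ ω, ((G ω) ^ 2 + (-(2*c*h)) * (G ω * s ω) + (-(2*c)) * (G ω * N ω)) ∂μ)
          + ∫ ω, (c^2*h^2) * (s ω) ^ 2 ∂μ :=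
      MeasureTheory.integral_add A2 (intS2.const_mul _)
    have A3 : Integrable (fun ω => (G ω) ^ 2 + (-(2*c*h)) * (G ω * s ω)
        + (-(2*c)) * (G ω * N ω) + (c^2*h^2) * (s ω) ^ 2) μ := A2.add (intS2.const_mul _)
    have E4 : ∫ ω, ((G ω) ^ 2 + (-(2*c*h)) * (G ω * s ω) + (-(2*c)) * (G ω * N ω)
          + (c^2*h^2) * (s ω) ^ 2 + (2*c^2*h) * (s ω * N ω)) ∂μ
        = (∫ ω, ((G ω) ^ 2 + (-(2*c*h)) * (G ω * s ω) + (-(2*c)) * (G ω * N ω)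
          + (c^2*h^2) * (s ω) ^ 2) ∂μ) + ∫ ω, (2*c^2*h) * (s ω * N ω) ∂μ :=
      MeasureTheory.integral_add A3 (intSN.const_mul _)
    have A4 : Integrable (fun ω => (G ω) ^ 2 + (-(2*c*h)) * (G ω * s ω)
        + (-(2*c)) * (G ω * N ω) + (c^2*h^2) * (s ω) ^ 2 + (2*c^2*h) * (s ω * N ω)) μ :=
      A3.add (intSN.const_mul _)
    have E5 : ∫ ω, ((G ω) ^ 2 + (-(2*c*h)) * (G ω * s ω) + (-(2*c)) * (G ω * N ω)
          + (c^2*h^2) * (s ω) ^ 2 + (2*c^2*h) * (s ω * N ω) + c^2 * (N ω) ^ 2) ∂μ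
        = (∫ ω, ((G ω) ^ 2 + (-(2*c*h)) * (G ω * s ω) + (-(2*c)) * (G ω * N ω)
          + (c^2*h^2) * (s ω) ^ 2 + (2*c^2*h) * (s ω * N ω)) ∂μ)
          + ∫ ω, c^2 * (N ω) ^ 2 ∂μ :=
      MeasureTheory.integral_add A4 (intN2.const_mul _)
    rw [E5, E4, E3, E2, E1,
      MeasureTheory.integral_const_mul, MeasureTheory.integral_const_mul,
      MeasureTheory.integral_const_mul, MeasureTheory.integral_const_mul,
      MeasureTheory.integral_const_mul, I1, I2, I3, I4, I5, I6]
    ring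
  have hb : (0:ℝ) < h ^ 2 + σ ^ 2 := by positivity
  have hsq : √(2 / π) * √(2 / π) = 2 / π := Real.mul_self_sqrt (by positivity)
  have ha : cstar * (h ^ 2 + σ ^ 2) = h * (ν * √(2 / π)) := by
    rw [hcstar]
    field_simp
  constructor
  · intro c
    rw [key cstar, key c]
    have expand : (ν ^ 2 - 2 * c * (h * (ν * √(2 / π))) + c ^ 2 * (h ^ 2 + σ ^ 2))
        - (ν ^ 2 - 2 * cstar * (h * (ν * √(2 / π))) + cstar ^ 2 * (h ^ 2 + σ ^ 2))
        = (h ^ 2 + σ ^ 2) * (c - cstar) ^ 2 := by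
      linear_combination (2 * (c - cstar)) * ha
    linarith [expand, mul_nonneg hb.le (sq_nonneg (c - cstar))]
  · rw [key cstar, hcstar]
    have hπ := pi_pos
    set t := √(2 / π) with ht
    have ht2 : t ^ 2 = 2 / π := Real.sq_sqrt (by positivity)
    rw [← ht2]
    field_simp
    ring
end

section
/- (One-step expected descent.) Let E be a finite-dimensional real inner product space, L > 0, and f : E → ℝ a differentiable function whose gradient ∇f satisfies the quadratic upper bound f(y) ≤ f(x) + ⟨∇f(x), y − x⟩ + (L/2)·‖y − x‖² for all x, y ∈ E. Let (Ω, μ) be a probability space, W : Ω → E and e : Ω → E random variables, and γ > 0, σ² ≥ 0 such that E[⟨∇f(W), e⟩] = 0 and E[‖e‖²] ≤ σ², with f(W), f(W′), ‖∇f(W)‖², ‖e‖², and ⟨∇f(W), e⟩ integrable, where W′ = W − γ·(∇f(W) + e). Then E[f(W′)] ≤ E[f(W)] − γ·(1 − γL/2)·E[‖∇f(W)‖²] + (γ²·L/2)·σ². -/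
open Real MeasureTheory

/-- One-step expected descent for gradient descent with a noisy aggregated gradient. -/
theorem stmt_13 {E : Type*} [NormedAddCommGroup E] [InnerProductSpace ℝ E]
    [FiniteDimensional ℝ E]
    (L : ℝ) (hL : 0 < L) (f : E → ℝ) (hdiff : Differentiable ℝ f)
    (hsmooth : ∀ x y : E, f y ≤ f x + inner ℝ (gradient f x) (y - x) +
      (L / 2) * ‖y - x‖ ^ 2)
    {Ω : Type*} [MeasurableSpace Ω] (μ : Measure Ω) [IsProbabilityMeasure μ]
    (W e : Ω → E) (γ : ℝ) (hγ : 0 < γ) (σsq : ℝ) (hσsq : 0 ≤ σsq)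
    (W' : Ω → E) (hW' : W' = fun ω => W ω - γ • (gradient f (W ω) + e ω))
    (hunbiased : ∫ ω, (inner ℝ (gradient f (W ω)) (e ω) : ℝ) ∂μ = 0)
    (hmse : ∫ ω, ‖e ω‖ ^ 2 ∂μ ≤ σsq)
    (hint1 : Integrable (fun ω => f (W ω)) μ)
    (hint2 : Integrable (fun ω => f (W' ω)) μ)
    (hint3 : Integrable (fun ω => ‖gradient f (W ω)‖ ^ 2) μ)
    (hint4 : Integrable (fun ω => ‖e ω‖ ^ 2) μ)
    (hint5 : Integrable (fun ω => (inner ℝ (gradient f (W ω)) (e ω) : ℝ)) μ) :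
    ∫ ω, f (W' ω) ∂μ ≤ ∫ ω, f (W ω) ∂μ -
      γ * (1 - γ * L / 2) * ∫ ω, ‖gradient f (W ω)‖ ^ 2 ∂μ + γ ^ 2 * L / 2 * σsq := by
  set g : Ω → E := fun ω => gradient f (W ω) with hg
  -- pointwise bound
  have hpt : ∀ ω, f (W' ω) ≤ f (W ω) - γ * (1 - γ * L / 2) * ‖g ω‖ ^ 2
      + γ * (γ * L - 1) * (inner ℝ (g ω) (e ω) : ℝ) + γ ^ 2 * L / 2 * ‖e ω‖ ^ 2 := by
    intro ω
    have h := hsmooth (W ω) (W' ω)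
    have hdiffpt : W' ω - W ω = -(γ • (g ω + e ω)) := by
      simp only [hW', hg, sub_sub_cancel_left]
    rw [hdiffpt] at h
    have hinner : (inner ℝ (g ω) (-(γ • (g ω + e ω))) : ℝ)
        = -γ * (‖g ω‖ ^ 2 + inner ℝ (g ω) (e ω)) := by
      rw [inner_neg_right, inner_smul_right, inner_add_right, real_inner_self_eq_norm_sq]
      ring
    have hnorm : ‖-(γ • (g ω + e ω))‖ ^ 2
        = γ ^ 2 * (‖g ω‖ ^ 2 + 2 * inner ℝ (g ω) (e ω) + ‖e ω‖ ^ 2) := by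
      rw [norm_neg, norm_smul, mul_pow, Real.norm_eq_abs, sq_abs,
        ← real_inner_self_eq_norm_sq, inner_add_add_self, real_inner_self_eq_norm_sq,
        real_inner_self_eq_norm_sq, real_inner_comm (e ω) (g ω)]
      ring
    rw [hinner, hnorm] at h
    calc f (W' ω) ≤ f (W ω) + -γ * (‖g ω‖ ^ 2 + inner ℝ (g ω) (e ω))
        + L / 2 * (γ ^ 2 * (‖g ω‖ ^ 2 + 2 * inner ℝ (g ω) (e ω) + ‖e ω‖ ^ 2)) := h
      _ = f (W ω) - γ * (1 - γ * L / 2) * ‖g ω‖ ^ 2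
        + γ * (γ * L - 1) * (inner ℝ (g ω) (e ω) : ℝ) + γ ^ 2 * L / 2 * ‖e ω‖ ^ 2 := by ring
  have i1 : Integrable (fun ω => γ * (1 - γ * L / 2) * ‖g ω‖ ^ 2) μ := hint3.const_mul _
  have i2 : Integrable (fun ω => γ * (γ * L - 1) * (inner ℝ (g ω) (e ω) : ℝ)) μ :=
    hint5.const_mul _
  have i3 : Integrable (fun ω => γ ^ 2 * L / 2 * ‖e ω‖ ^ 2) μ := hint4.const_mul _
  have i4 : Integrable (fun ω => f (W ω) - γ * (1 - γ * L / 2) * ‖g ω‖ ^ 2) μ := hint1.sub i1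
  have i5 : Integrable (fun ω => f (W ω) - γ * (1 - γ * L / 2) * ‖g ω‖ ^ 2
      + γ * (γ * L - 1) * (inner ℝ (g ω) (e ω) : ℝ)) μ := i4.add i2
  have hIrhs : Integrable (fun ω => f (W ω) - γ * (1 - γ * L / 2) * ‖g ω‖ ^ 2
      + γ * (γ * L - 1) * (inner ℝ (g ω) (e ω) : ℝ) + γ ^ 2 * L / 2 * ‖e ω‖ ^ 2) μ := i5.add i3
  have hle := integral_mono hint2 hIrhs hpt
  have heq : ∫ ω, (f (W ω) - γ * (1 - γ * L / 2) * ‖g ω‖ ^ 2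
      + γ * (γ * L - 1) * (inner ℝ (g ω) (e ω) : ℝ) + γ ^ 2 * L / 2 * ‖e ω‖ ^ 2) ∂μ
      = ∫ ω, f (W ω) ∂μ - γ * (1 - γ * L / 2) * ∫ ω, ‖g ω‖ ^ 2 ∂μ
      + γ ^ 2 * L / 2 * ∫ ω, ‖e ω‖ ^ 2 ∂μ := by
    rw [integral_add i5 i3, integral_add i4 i2, integral_sub hint1 i1,
      integral_const_mul, integral_const_mul, integral_const_mul, hunbiased]
    ring
  rw [heq] at hle
  have : γ ^ 2 * L / 2 * ∫ ω, ‖e ω‖ ^ 2 ∂μ ≤ γ ^ 2 * L / 2 * σsq := by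
    apply mul_le_mul_of_nonneg_left hmse
    positivity
  linarith
end

section
/- (Theorem 2, convergence of SBFL.) Let E be a finite-dimensional real inner product space, L > 0, γ > 0 with γ·L < 2, σ² ≥ 0, and f : E → ℝ a differentiable function bounded below by f* ∈ ℝ and satisfying f(y) ≤ f(x) + ⟨∇f(x), y − x⟩ + (L/2)·‖y − x‖² for all x, y. Let (Ω, μ) be a probability space, w⁰ ∈ E, and let random sequences W_t, e_t : Ω → E satisfy W_0 = w⁰ (constant) and W_{t+1} = W_t − (γ/√(t+1))·(∇f(W_t) + e_t) for all t ≥ 0, where for every t: E[⟨∇f(W_t), e_t⟩] = 0, E[‖e_t‖²] ≤ σ², and f(W_t), ‖∇f(W_t)‖², ‖e_t‖², ⟨∇f(W_t), e_t⟩ are integrable. Then for every integer T ≥ 1: (1/T)·Σ_{t=0}^{T−1} E[‖∇f(W_t)‖²] ≤ (1/√T)·[ (f(w⁰) − f*) / (γ·(1 − γL/2)) + σ²·(1 + ln T)·(γL/2) / (1 − γL/2) ]. In particular, the time-averaged expected squared gradient norm tends to 0 as T → ∞, so the iterates converge to a stationary point of the (possibly non-convex) loss. -/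
open Real MeasureTheory Finset Filter Topology

lemma aux_harmonic_bound : ∀ T : ℕ, 1 ≤ T →
    ∑ t ∈ Finset.range T, (1 : ℝ) / (t + 1) ≤ 1 + Real.log T := by
  intro T hT
  induction T, hT using Nat.le_induction with
  | base => simp
  | succ n hn ih =>
    rw [Finset.sum_range_succ]
    have hn0 : (0 : ℝ) < n := by exact_mod_cast hn
    have h := Real.log_le_sub_one_of_pos (show (0 : ℝ) < (n : ℝ) / ((n : ℝ) + 1) by positivity)
    rw [Real.log_div (ne_of_gt hn0) (by positivity)] at h
    have he : (n : ℝ) / ((n : ℝ) + 1) - 1 = -(1 / ((n : ℝ) + 1)) := by field_simp; ring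
    push_cast
    linarith [ih]

lemma aux_sqrt_atTop : Tendsto Real.sqrt atTop atTop := by
  apply tendsto_atTop_atTop_of_monotone (fun a b hab => Real.sqrt_le_sqrt hab)
  intro b
  exact ⟨b ^ 2, by rw [Real.sqrt_sq_eq_abs]; exact le_abs_self b⟩

/-- Theorem 2: convergence of SBFL for L-smooth non-convex losses bounded below, with
learning rate γ/√(t+1) and unbiased aggregation error of mean-squared norm at most σ². -/
theorem stmt_15 {E : Type*} [NormedAddCommGroup E] [InnerProductSpace ℝ E]
    [FiniteDimensional ℝ E]
    (L γ σsq fstar : ℝ) (hL : 0 < L) (hγ : 0 < γ) (hγL : γ * L < 2) (hσsq : 0 ≤ σsq)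
    (f : E → ℝ) (hdiff : Differentiable ℝ f) (hlb : ∀ x, fstar ≤ f x)
    (hsmooth : ∀ x y : E, f y ≤ f x + inner ℝ (gradient f x) (y - x) +
      (L / 2) * ‖y - x‖ ^ 2)
    {Ω : Type*} [MeasurableSpace Ω] (μ : Measure Ω) [IsProbabilityMeasure μ]
    (w0 : E) (W e : ℕ → Ω → E)
    (hW0 : W 0 = fun _ => w0)
    (hWrec : ∀ t : ℕ, W (t + 1) =
      fun ω => W t ω - (γ / Real.sqrt (t + 1)) • (gradient f (W t ω) + e t ω))
    (hunbiased : ∀ t, ∫ ω, (inner ℝ (gradient f (W t ω)) (e t ω) : ℝ) ∂μ = 0)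
    (hmse : ∀ t, ∫ ω, ‖e t ω‖ ^ 2 ∂μ ≤ σsq)
    (hint1 : ∀ t, Integrable (fun ω => f (W t ω)) μ)
    (hint2 : ∀ t, Integrable (fun ω => ‖gradient f (W t ω)‖ ^ 2) μ)
    (hint3 : ∀ t, Integrable (fun ω => ‖e t ω‖ ^ 2) μ)
    (hint4 : ∀ t, Integrable (fun ω => (inner ℝ (gradient f (W t ω)) (e t ω) : ℝ)) μ) :
    (∀ T : ℕ, 1 ≤ T →
      (1 / (T : ℝ)) * ∑ t ∈ range T, ∫ ω, ‖gradient f (W t ω)‖ ^ 2 ∂μ ≤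
        (1 / Real.sqrt T) * ((f w0 - fstar) / (γ * (1 - γ * L / 2)) +
          σsq * (1 + Real.log T) * (γ * L / 2) / (1 - γ * L / 2))) ∧
    Tendsto (fun T : ℕ =>
        (1 / (T : ℝ)) * ∑ t ∈ range T, ∫ ω, ‖gradient f (W t ω)‖ ^ 2 ∂μ)
      atTop (𝓝 0) := by
  have hcc : 0 < 1 - γ * L / 2 := by nlinarith
  set F : ℕ → ℝ := fun t => ∫ ω, f (W t ω) ∂μ with hF
  set G : ℕ → ℝ := fun t => ∫ ω, ‖gradient f (W t ω)‖ ^ 2 ∂μ with hG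
  set c : ℕ → ℝ := fun t => γ / Real.sqrt (t + 1) with hc
  have hsqrt_pos : ∀ t : ℕ, 0 < Real.sqrt ((t : ℝ) + 1) :=
    fun t => Real.sqrt_pos.2 (by positivity)
  have hcpos : ∀ t, 0 < c t := fun t => div_pos hγ (hsqrt_pos t)
  have hcle : ∀ t, c t ≤ γ := by
    intro t
    rw [hc]
    simp only
    rw [div_le_iff₀ (hsqrt_pos t)]
    have h1 : (1 : ℝ) ≤ Real.sqrt ((t : ℝ) + 1) :=
      Real.one_le_sqrt.2 (le_add_of_nonneg_left (Nat.cast_nonneg t))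
    nlinarith
  have hGnonneg : ∀ t, 0 ≤ G t := fun t => integral_nonneg fun ω => by positivity
  -- key one-step inequality
  have key : ∀ t : ℕ, c t * (1 - L * c t / 2) * G t ≤
      F t - F (t + 1) + L / 2 * (c t) ^ 2 * σsq := by
    intro t
    set ct := c t with hct
    have hpt : ∀ ω, f (W (t + 1) ω) ≤ f (W t ω)
        + (L / 2 * ct ^ 2 - ct) * ‖gradient f (W t ω)‖ ^ 2
        + (L * ct ^ 2 - ct) * (inner ℝ (gradient f (W t ω)) (e t ω) : ℝ)
        + (L / 2 * ct ^ 2) * ‖e t ω‖ ^ 2 := by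
      intro ω
      have h := hsmooth (W t ω) (W (t + 1) ω)
      have hstep : W (t + 1) ω - W t ω = -(ct • (gradient f (W t ω) + e t ω)) := by
        rw [congrFun (hWrec t) ω]
        exact sub_sub_cancel_left _ _
      rw [hstep, inner_neg_right, real_inner_smul_right, inner_add_right,
        real_inner_self_eq_norm_sq, norm_neg, norm_smul, mul_pow,
        norm_add_sq_real, Real.norm_eq_abs, sq_abs] at h
      nlinarith [h]
    have hI12 : Integrable (fun ω => f (W t ω)
        + (L / 2 * ct ^ 2 - ct) * ‖gradient f (W t ω)‖ ^ 2) μ :=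
      (hint1 t).add ((hint2 t).const_mul _)
    have hI123 : Integrable (fun ω => f (W t ω)
        + (L / 2 * ct ^ 2 - ct) * ‖gradient f (W t ω)‖ ^ 2
        + (L * ct ^ 2 - ct) * (inner ℝ (gradient f (W t ω)) (e t ω) : ℝ)) μ :=
      hI12.add ((hint4 t).const_mul _)
    have hInt : Integrable (fun ω => f (W t ω)
        + (L / 2 * ct ^ 2 - ct) * ‖gradient f (W t ω)‖ ^ 2
        + (L * ct ^ 2 - ct) * (inner ℝ (gradient f (W t ω)) (e t ω) : ℝ)
        + (L / 2 * ct ^ 2) * ‖e t ω‖ ^ 2) μ :=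
      hI123.add ((hint3 t).const_mul _)
    have hmono := integral_mono (hint1 (t + 1)) hInt hpt
    rw [integral_add hI123 ((hint3 t).const_mul _),
      integral_add hI12 ((hint4 t).const_mul _),
      integral_add (hint1 t) ((hint2 t).const_mul _),
      integral_const_mul, integral_const_mul, integral_const_mul, hunbiased t] at hmono
    have hcoef : 0 ≤ L / 2 * ct ^ 2 := mul_nonneg (by linarith) (sq_nonneg ct)
    have hS : (L / 2 * ct ^ 2) * (∫ ω, ‖e t ω‖ ^ 2 ∂μ) ≤ (L / 2 * ct ^ 2) * σsq :=
      mul_le_mul_of_nonneg_left (hmse t) hcoef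
    have hring : ct * (1 - L * ct / 2) * G t = -((L / 2 * ct ^ 2 - ct) * G t) := by ring
    rw [hring]
    simp only [hF, hG] at *
    linarith [hmono, hS]
  have hF0 : F 0 = f w0 := by
    simp only [hF, hW0]
    simp
  have hFbelow : ∀ t, fstar ≤ F t := by
    intro t
    have := integral_mono (integrable_const fstar) (hint1 t) (fun ω => hlb (W t ω))
    simpa using this
  have hΔ : 0 ≤ f w0 - fstar := by linarith [hlb w0]
  -- part 1
  have part1 : ∀ T : ℕ, 1 ≤ T →
      (1 / (T : ℝ)) * ∑ t ∈ range T, G t ≤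
        (1 / Real.sqrt T) * ((f w0 - fstar) / (γ * (1 - γ * L / 2)) +
          σsq * (1 + Real.log T) * (γ * L / 2) / (1 - γ * L / 2)) := by
    intro T hT
    have hT0 : (0 : ℝ) < T := by exact_mod_cast hT
    set s : ℝ := Real.sqrt T with hs
    have hspos : 0 < s := Real.sqrt_pos.2 hT0
    have hss : s * s = T := Real.mul_self_sqrt hT0.le
    set R : ℝ := (f w0 - fstar) + (L / 2 * γ ^ 2 * σsq) * (1 + Real.log T) with hR
    set Q : ℝ := (f w0 - fstar) / (γ * (1 - γ * L / 2)) +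
        σsq * (1 + Real.log T) * (γ * L / 2) / (1 - γ * L / 2) with hQ
    have hcoef2 : 0 ≤ L / 2 * γ ^ 2 * σsq :=
      mul_nonneg (mul_nonneg (by linarith) (sq_nonneg γ)) hσsq
    have hsum : (γ / s) * (1 - γ * L / 2) * ∑ t ∈ range T, G t ≤ R := by
      have step1 : (γ / s) * (1 - γ * L / 2) * ∑ t ∈ range T, G t ≤
          ∑ t ∈ range T, c t * (1 - L * c t / 2) * G t := by
        rw [mul_sum]
        apply sum_le_sum
        intro t ht
        have h1 : γ / s ≤ c t := by
          rw [hc]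
          simp only
          apply div_le_div_of_nonneg_left hγ.le (hsqrt_pos t)
          apply Real.sqrt_le_sqrt
          have : (t : ℝ) + 1 ≤ T := by
            have := Finset.mem_range.1 ht
            exact_mod_cast Nat.succ_le_of_lt this
          exact this
        have h2 : 1 - γ * L / 2 ≤ 1 - L * c t / 2 := by
          have := mul_le_mul_of_nonneg_left (hcle t) hL.le
          linarith
        have h3 : (γ / s) * (1 - γ * L / 2) ≤ c t * (1 - L * c t / 2) :=
          mul_le_mul h1 h2 hcc.le (hcpos t).le
        exact mul_le_mul_of_nonneg_right h3 (hGnonneg t)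
      have step2 : ∑ t ∈ range T, c t * (1 - L * c t / 2) * G t ≤
          ∑ t ∈ range T, (F t - F (t + 1)) +
            ∑ t ∈ range T, L / 2 * (c t) ^ 2 * σsq := by
        rw [← sum_add_distrib]
        exact sum_le_sum fun t _ => key t
      have step3 : ∑ t ∈ range T, (F t - F (t + 1)) = F 0 - F T :=
        Finset.sum_range_sub' F T
      have step4 : ∑ t ∈ range T, L / 2 * (c t) ^ 2 * σsq =
          (L / 2 * γ ^ 2 * σsq) * ∑ t ∈ range T, (1 : ℝ) / (t + 1) := by
        rw [mul_sum]
        refine sum_congr rfl fun t _ => ?_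
        have hsq : (c t) ^ 2 = γ ^ 2 * (1 / ((t : ℝ) + 1)) := by
          rw [hc]
          simp only
          rw [div_pow, Real.sq_sqrt (by positivity)]
          ring
        rw [hsq]; ring
      have harm := aux_harmonic_bound T hT
      have hmul := mul_le_mul_of_nonneg_left harm hcoef2
      calc (γ / s) * (1 - γ * L / 2) * ∑ t ∈ range T, G t
          ≤ ∑ t ∈ range T, c t * (1 - L * c t / 2) * G t := step1
        _ ≤ ∑ t ∈ range T, (F t - F (t + 1)) + ∑ t ∈ range T, L / 2 * (c t) ^ 2 * σsq :=
            step2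
        _ = (F 0 - F T) + (L / 2 * γ ^ 2 * σsq) * ∑ t ∈ range T, (1 : ℝ) / (t + 1) := by
            rw [step3, step4]
        _ ≤ R := by
            rw [hR, hF0]
            have := hFbelow T
            linarith
    have hQR : Q * (γ * (1 - γ * L / 2)) = R := by
      have hne1 : (1 - γ * L / 2) ≠ 0 := ne_of_gt hcc
      have hne2 : γ ≠ 0 := ne_of_gt hγ
      have hne3 : γ * 2 - γ ^ 2 * L ≠ 0 := by nlinarith
      have hne4 : (2 : ℝ) - γ * L ≠ 0 := by intro h; rw [sub_eq_zero] at h; linarith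
      rw [hQ, hR]
      field_simp
    have h1 : γ * (1 - γ * L / 2) * ∑ t ∈ range T, G t ≤ s * R := by
      have e1 : (γ / s) * (1 - γ * L / 2) * ∑ t ∈ range T, G t =
          (γ * (1 - γ * L / 2) * ∑ t ∈ range T, G t) / s := by ring
      rw [e1, div_le_iff₀ hspos] at hsum
      linarith [hsum]
    have hpos : 0 < γ * (1 - γ * L / 2) := mul_pos hγ hcc
    have h2 : ∑ t ∈ range T, G t ≤ s * Q := by
      rw [← mul_le_mul_iff_of_pos_right hpos]
      calc (∑ t ∈ range T, G t) * (γ * (1 - γ * L / 2))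
          = γ * (1 - γ * L / 2) * ∑ t ∈ range T, G t := by ring
        _ ≤ s * R := h1
        _ = s * Q * (γ * (1 - γ * L / 2)) := by rw [← hQR]; ring
    calc (1 / (T : ℝ)) * ∑ t ∈ range T, G t
        = (∑ t ∈ range T, G t) / (s * s) := by rw [hss]; ring
      _ ≤ (s * Q) / (s * s) := by
          exact div_le_div_of_nonneg_right h2 (mul_pos hspos hspos).le
      _ = (1 / s) * Q := by
          field_simp
  refine ⟨part1, ?_⟩
  -- part 2: tendsto
  set A : ℝ := (f w0 - fstar) / (γ * (1 - γ * L / 2)) with hA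
  set C : ℝ := σsq * (γ * L / 2) / (1 - γ * L / 2) with hC
  have hreal : Tendsto (fun x : ℝ => (1 / Real.sqrt x) * (A + C * (1 + Real.log x)))
      atTop (𝓝 0) := by
    have h1 : Tendsto (fun x : ℝ => (A + C) * (Real.sqrt x)⁻¹) atTop (𝓝 0) := by
      simpa using (tendsto_inv_atTop_zero.comp aux_sqrt_atTop).const_mul (A + C)
    have hlogd : Tendsto (fun y : ℝ => Real.log y / y) atTop (𝓝 0) := by
      simpa using Real.tendsto_pow_log_div_mul_add_atTop 1 0 1 one_ne_zero
    have h2 : Tendsto (fun x : ℝ => (2 * C) * (Real.log (Real.sqrt x) / Real.sqrt x))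
        atTop (𝓝 0) := by
      simpa using (hlogd.comp aux_sqrt_atTop).const_mul (2 * C)
    have h3 := h1.add h2
    rw [add_zero] at h3
    apply h3.congr'
    filter_upwards [eventually_ge_atTop (1 : ℝ)] with x hx
    have hx0 : (0 : ℝ) < x := by linarith
    have hsx : 0 < Real.sqrt x := Real.sqrt_pos.2 hx0
    rw [Real.log_sqrt hx0.le]
    field_simp
    ring
  have hcomp : Tendsto (fun T : ℕ =>
      (1 / Real.sqrt T) * (A + C * (1 + Real.log T))) atTop (𝓝 0) :=
    hreal.comp tendsto_natCast_atTop_atTop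
  apply tendsto_of_tendsto_of_tendsto_of_le_of_le' tendsto_const_nhds hcomp
  · exact Eventually.of_forall fun T =>
      mul_nonneg (by positivity) (sum_nonneg fun t _ => hGnonneg t)
  · filter_upwards [eventually_ge_atTop 1] with T hT
    calc (1 / (T : ℝ)) * ∑ t ∈ range T, G t
        ≤ (1 / Real.sqrt T) * ((f w0 - fstar) / (γ * (1 - γ * L / 2)) +
          σsq * (1 + Real.log T) * (γ * L / 2) / (1 - γ * L / 2)) := part1 T hT
      _ = (1 / Real.sqrt T) * (A + C * (1 + Real.log T)) := by
          rw [hA, hC]; ring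
end
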